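/- Let V be a finite set with |V| ≥ 2 and define the polytope P₁ = {(x, w) ∈ (V → ℝ) × ℝ : ∑_{v∈V} x_v ≥ 2, w − ∑_{v∈V} x_v + 1 ≤ 0, 0 ≤ x_v ≤ 1 for every v ∈ V, and w ≥ 0}. Then every extreme point (x, w) of P₁ is integral: x_v ∈ {0,1} for every v ∈ V and w is a (nonnegative) integer. -/

import Mathlib

/-- If `p` is an extreme point of `S` and both `p + d` and `p - d` lie in `S`,
then `d = 0`. -/
lemma extreme_perturb {E : Type*} [AddCommGroup E] [Module ℝ E] {S : Set E} {p d : E}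
    (hp : p ∈ Set.extremePoints ℝ S) (h1 : p + d ∈ S) (h2 : p - d ∈ S) : d = 0 := by
  have h : p + d = p := (hp.2 h1 h2
    ⟨1/2, 1/2, by norm_num, by norm_num, by norm_num, by module⟩)
  exact add_eq_left.mp h

/-- A finite sum of reals, each of which is `0` or `1`, is a natural number. -/
lemma sum_01_nat {V : Type*} (s : Finset V) (f : V → ℝ) (h : ∀ v ∈ s, f v = 0 ∨ f v = 1) :
    ∃ m : ℕ, ∑ v ∈ s, f v = m := by
  classical
  refine ⟨(s.filter (fun v => f v = 1)).card, ?_⟩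
  rw [← Finset.sum_boole]
  exact Finset.sum_congr rfl fun v hv => by rcases h v hv with h | h <;> simp [h]

/-- Membership helper for the polytope `P₁` after a perturbation. -/
lemma perturb_mem {V : Type*} [Fintype V] (x g : V → ℝ) (w c e : ℝ)
    (hg : ∑ v, g v = e)
    (h1 : 2 ≤ (∑ v, x v) + e)
    (h2 : (w + c) - ((∑ v, x v) + e) + 1 ≤ 0)
    (h3 : ∀ v, 0 ≤ x v + g v ∧ x v + g v ≤ 1)
    (h4 : 0 ≤ w + c) :
    ((x, w) + (g, c) : (V → ℝ) × ℝ) ∈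
      {q : (V → ℝ) × ℝ | 2 ≤ ∑ v, q.1 v ∧ q.2 - (∑ v, q.1 v) + 1 ≤ 0 ∧
        (∀ v, 0 ≤ q.1 v ∧ q.1 v ≤ 1) ∧ 0 ≤ q.2} := by
  have key : ((x, w) + (g, c) : (V → ℝ) × ℝ) = (x + g, w + c) := rfl
  rw [key]
  have hxg : ∑ v, (x + g) v = (∑ v, x v) + e := by
    simp only [Pi.add_apply, Finset.sum_add_distrib, hg]
  refine ⟨?_, ?_, fun v => ?_, ?_⟩
  · show 2 ≤ ∑ v, (x + g) v
    rw [hxg]; exact h1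
  · show (w + c) - (∑ v, (x + g) v) + 1 ≤ 0
    rw [hxg]; exact h2
  · show 0 ≤ (x + g) v ∧ (x + g) v ≤ 1
    exact h3 v
  · exact h4

/-- every extreme point `(x, w)` of the polytope
`P₁ = {(x, w) : ∑ x v ≥ 2, w − ∑ x v + 1 ≤ 0, 0 ≤ x v ≤ 1, w ≥ 0}` is integral. -/
theorem P1_extreme_points_integral (V : Type*) [Fintype V] (hV : 2 ≤ Fintype.card V)
    (p : (V → ℝ) × ℝ)
    (hp : p ∈ Set.extremePoints ℝ
      {q : (V → ℝ) × ℝ | 2 ≤ ∑ v, q.1 v ∧ q.2 - (∑ v, q.1 v) + 1 ≤ 0 ∧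
        (∀ v, 0 ≤ q.1 v ∧ q.1 v ≤ 1) ∧ 0 ≤ q.2}) :
    (∀ v, p.1 v = 0 ∨ p.1 v = 1) ∧ ∃ k : ℕ, p.2 = (k : ℝ) := by
  classical
  obtain ⟨hs, hw1, hx, hw0⟩ := hp.1
  -- Step A: no two distinct fractional coordinates.
  have hA : ∀ u v : V, u ≠ v → 0 < p.1 u → p.1 u < 1 → 0 < p.1 v → p.1 v < 1 → False := by
    intro u v huv hu0 hu1 hv0 hv1
    set ε := min (min (p.1 u) (1 - p.1 u)) (min (p.1 v) (1 - p.1 v)) with hεdef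
    have hεpos : 0 < ε := lt_min (lt_min hu0 (by linarith)) (lt_min hv0 (by linarith))
    have hε1 : ε ≤ p.1 u := le_trans (min_le_left _ _) (min_le_left _ _)
    have hε2 : ε ≤ 1 - p.1 u := le_trans (min_le_left _ _) (min_le_right _ _)
    have hε3 : ε ≤ p.1 v := le_trans (min_le_right _ _) (min_le_left _ _)
    have hε4 : ε ≤ 1 - p.1 v := le_trans (min_le_right _ _) (min_le_right _ _)
    set g : V → ℝ := fun t => (if t = u then ε else 0) - (if t = v then ε else 0) with hgdef
    have hbound : ∀ (δ : ℝ), |δ| ≤ 1 → ∀ t, 0 ≤ p.1 t + δ * g t ∧ p.1 t + δ * g t ≤ 1 := by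
      intro δ hδ t
      have ht := hx t
      have hδ1 : -1 ≤ δ := neg_le_of_abs_le hδ
      have hδ2 : δ ≤ 1 := le_of_abs_le hδ
      rw [hgdef]
      rcases eq_or_ne t u with rfl | htu
      · rcases eq_or_ne t v with rfl | htv
        · exact absurd rfl huv
        · simp only [if_pos rfl, if_true, eq_self_iff_true, if_neg htv, sub_zero]
          constructor <;> nlinarith [ht.1, ht.2]
      · rcases eq_or_ne t v with rfl | htv
        · simp only [if_neg htu, if_pos rfl, if_true, eq_self_iff_true, zero_sub, mul_neg]
          constructor <;> nlinarith [ht.1, ht.2]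
        · simp only [if_neg htu, if_neg htv, sub_zero, mul_zero]
          constructor <;> linarith [ht.1, ht.2]
    have hgs : ∑ t, g t = 0 := by
      rw [hgdef]
      rw [Finset.sum_sub_distrib]
      simp
    have hgns : ∑ t, (-g) t = 0 := by simp [Finset.sum_neg_distrib, hgs]
    have key : ((g, 0) : (V → ℝ) × ℝ) = 0 := by
      apply extreme_perturb hp
      · exact perturb_mem p.1 g p.2 0 0 hgs (by linarith) (by linarith)
          (by have := hbound 1 (by rw [abs_one]); simpa using this) (by linarith)
      · rw [sub_eq_add_neg, show (-((g, 0) : (V → ℝ) × ℝ)) = ((-g, 0) : (V → ℝ) × ℝ) by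
          simp [Prod.ext_iff]]
        exact perturb_mem p.1 (-g) p.2 0 0 hgns (by linarith) (by linarith)
          (by have := hbound (-1) (by rw [abs_neg, abs_one])
              simpa using this) (by linarith)
    have h0 := congrFun (congrArg Prod.fst key) u
    rw [hgdef] at h0
    simp only [if_pos rfl, if_true, eq_self_iff_true, if_neg huv, sub_zero, Pi.zero_apply] at h0
    exact absurd h0 (ne_of_gt hεpos)
  -- Step B: all coordinates are 0 or 1.
  have hB : ∀ v, p.1 v = 0 ∨ p.1 v = 1 := by
    by_contra hcon
    push_neg at hcon
    obtain ⟨v, hv0', hv1'⟩ := hcon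
    have hv0 : 0 < p.1 v := lt_of_le_of_ne (hx v).1 (Ne.symm hv0')
    have hv1 : p.1 v < 1 := lt_of_le_of_ne (hx v).2 hv1'
    have hothers : ∀ u ∈ Finset.univ.erase v, p.1 u = 0 ∨ p.1 u = 1 := by
      intro u hu
      by_contra h'
      push_neg at h'
      exact hA u v (Finset.ne_of_mem_erase hu)
        (lt_of_le_of_ne (hx u).1 (Ne.symm h'.1)) (lt_of_le_of_ne (hx u).2 h'.2) hv0 hv1
    obtain ⟨m, hm⟩ := sum_01_nat _ _ hothers
    have hsplit : ∑ t, p.1 t = p.1 v + m := by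
      rw [← hm, Finset.add_sum_erase _ _ (Finset.mem_univ v)]
    have hmge : (2 : ℝ) ≤ m := by
      have h1 : (1 : ℝ) < m := by
        rw [hsplit] at hs; linarith
      have : 1 < m := by exact_mod_cast h1
      exact_mod_cast this
    have hsgt : 2 < ∑ t, p.1 t := by rw [hsplit]; linarith
    -- perturbation of x_v (and possibly w)
    rcases eq_or_lt_of_le hw0 with hw | hw
    · -- w = 0 : perturb x_v alone
      set ε := min (min (p.1 v) (1 - p.1 v)) ((∑ t, p.1 t) - 2) with hεdef
      have hεpos : 0 < ε := lt_min (lt_min hv0 (by linarith)) (by linarith)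
      have hε1 : ε ≤ p.1 v := le_trans (min_le_left _ _) (min_le_left _ _)
      have hε2 : ε ≤ 1 - p.1 v := le_trans (min_le_left _ _) (min_le_right _ _)
      have hε3 : ε ≤ (∑ t, p.1 t) - 2 := min_le_right _ _
      set g : V → ℝ := fun t => if t = v then ε else 0 with hgdef
      have hgs : ∑ t, g t = ε := by rw [hgdef]; simp [Finset.sum_ite_eq']
      have hgns : ∑ t, (-g) t = -ε := by simp [Finset.sum_neg_distrib, hgs]
      have hbd : ∀ t, (0 ≤ p.1 t + g t ∧ p.1 t + g t ≤ 1) ∧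
          (0 ≤ p.1 t + (-g) t ∧ p.1 t + (-g) t ≤ 1) := by
        intro t
        have ht := hx t
        rw [hgdef]
        rcases eq_or_ne t v with rfl | htv
        · simp only [if_pos rfl, if_true, eq_self_iff_true, Pi.neg_apply]
          refine ⟨⟨by linarith, by linarith⟩, ⟨by linarith, by linarith⟩⟩
        · simp only [if_neg htv, Pi.neg_apply, neg_zero, add_zero]
          exact ⟨ht, ht⟩
      have key : ((g, 0) : (V → ℝ) × ℝ) = 0 := by
        apply extreme_perturb hp
        · exact perturb_mem p.1 g p.2 0 ε hgs (by linarith) (by linarith)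
            (fun t => (hbd t).1) (by linarith)
        · rw [sub_eq_add_neg, show (-((g, 0) : (V → ℝ) × ℝ)) = ((-g, 0) : (V → ℝ) × ℝ) by
            simp [Prod.ext_iff]]
          exact perturb_mem p.1 (-g) p.2 0 (-ε) hgns (by linarith) (by linarith)
            (fun t => (hbd t).2) (by linarith)
      have h0 := congrFun (congrArg Prod.fst key) v
      rw [hgdef] at h0
      simp only [if_pos rfl, if_true, eq_self_iff_true, Pi.zero_apply] at h0
      exact absurd h0 (ne_of_gt hεpos)
    · -- w > 0 : perturb x_v and w together
      set ε := min (min (p.1 v) (1 - p.1 v)) (min ((∑ t, p.1 t) - 2) p.2) with hεdef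
      have hεpos : 0 < ε := lt_min (lt_min hv0 (by linarith)) (lt_min (by linarith) hw)
      have hε1 : ε ≤ p.1 v := le_trans (min_le_left _ _) (min_le_left _ _)
      have hε2 : ε ≤ 1 - p.1 v := le_trans (min_le_left _ _) (min_le_right _ _)
      have hε3 : ε ≤ (∑ t, p.1 t) - 2 := le_trans (min_le_right _ _) (min_le_left _ _)
      have hε4 : ε ≤ p.2 := le_trans (min_le_right _ _) (min_le_right _ _)
      set g : V → ℝ := fun t => if t = v then ε else 0 with hgdef
      have hgs : ∑ t, g t = ε := by rw [hgdef]; simp [Finset.sum_ite_eq']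
      have hgns : ∑ t, (-g) t = -ε := by simp [Finset.sum_neg_distrib, hgs]
      have hbd : ∀ t, (0 ≤ p.1 t + g t ∧ p.1 t + g t ≤ 1) ∧
          (0 ≤ p.1 t + (-g) t ∧ p.1 t + (-g) t ≤ 1) := by
        intro t
        have ht := hx t
        rw [hgdef]
        rcases eq_or_ne t v with rfl | htv
        · simp only [if_pos rfl, if_true, eq_self_iff_true, Pi.neg_apply]
          refine ⟨⟨by linarith, by linarith⟩, ⟨by linarith, by linarith⟩⟩
        · simp only [if_neg htv, Pi.neg_apply, neg_zero, add_zero]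
          exact ⟨ht, ht⟩
      have key : ((g, ε) : (V → ℝ) × ℝ) = 0 := by
        apply extreme_perturb hp
        · exact perturb_mem p.1 g p.2 ε ε hgs (by linarith) (by linarith)
            (fun t => (hbd t).1) (by linarith)
        · rw [sub_eq_add_neg, show (-((g, ε) : (V → ℝ) × ℝ)) = ((-g, -ε) : (V → ℝ) × ℝ) by
            simp [Prod.ext_iff]]
          exact perturb_mem p.1 (-g) p.2 (-ε) (-ε) hgns (by linarith) (by linarith)
            (fun t => (hbd t).2) (by linarith)
      have h0 := congrFun (congrArg Prod.fst key) v
      rw [hgdef] at h0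
      simp only [if_pos rfl, if_true, eq_self_iff_true, Pi.zero_apply] at h0
      exact absurd h0 (ne_of_gt hεpos)
  refine ⟨hB, ?_⟩
  -- Step C: w is a natural number.
  obtain ⟨m, hm⟩ := sum_01_nat Finset.univ p.1 (fun v _ => hB v)
  rcases eq_or_lt_of_le hw0 with hw | hw
  · exact ⟨0, by simp [← hw]⟩
  · have hweq : p.2 = (∑ t, p.1 t) - 1 := by
      by_contra hne
      have hwlt : p.2 < (∑ t, p.1 t) - 1 := lt_of_le_of_ne (by linarith) hne
      set ε := min p.2 ((∑ t, p.1 t) - 1 - p.2) with hεdef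
      have hεpos : 0 < ε := lt_min hw (by linarith)
      have hε1 : ε ≤ p.2 := min_le_left _ _
      have hε2 : ε ≤ (∑ t, p.1 t) - 1 - p.2 := min_le_right _ _
      have hgs : ∑ t, (0 : V → ℝ) t = 0 := by simp
      have key : (((0 : V → ℝ), ε) : (V → ℝ) × ℝ) = 0 := by
        apply extreme_perturb hp
        · exact perturb_mem p.1 0 p.2 ε 0 hgs (by linarith) (by linarith)
            (fun t => by simpa using hx t) (by linarith)
        · rw [sub_eq_add_neg, show (-(((0 : V → ℝ), ε) : (V → ℝ) × ℝ)) =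
              (((0 : V → ℝ), -ε) : (V → ℝ) × ℝ) by simp [Prod.ext_iff]]
          exact perturb_mem p.1 0 p.2 (-ε) 0 hgs (by linarith) (by linarith)
            (fun t => by simpa using hx t) (by linarith)
      have h0 := congrArg Prod.snd key
      simp only [Prod.snd_zero] at h0
      exact absurd h0 (ne_of_gt hεpos)
    have hm2 : 2 ≤ m := by
      have : (2 : ℝ) ≤ m := by rw [← hm]; exact hs
      exact_mod_cast this
    refine ⟨m - 1, ?_⟩
    rw [hweq, hm, Nat.cast_sub (by omega)]
    norm_num
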